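/- Dual lower bound (Proposition 5.1, item 2): let W : 𝕋^d → ℝ be continuous and suppose W admits an admissible dual decomposition W(x) = W⁺(x) + K(x) + 2c. Then for every measure F in the relaxed cone C, (1/2)∫ W dF ≥ c. In particular c is a lower bound for the minimum of the pairwise energy E over probability measures on 𝕋^d. -/

import Mathlib

open MeasureTheory Real
open scoped ENNReal

theorem cos2pi_periodic : Function.Periodic (fun t : ℝ => Real.cos (2 * Real.pi * t)) 1 := by
  intro x; simp [mul_add, Real.cos_add_two_pi]

theorem sin2pi_periodic : Function.Periodic (fun t : ℝ => Real.sin (2 * Real.pi * t)) 1 := by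
  intro x; simp [mul_add, Real.sin_add_two_pi]

/-- The function `x ↦ cos (2π x)` on the circle `ℝ/ℤ`. -/
noncomputable def cosA : AddCircle (1 : ℝ) → ℝ := cos2pi_periodic.lift

/-- The function `x ↦ sin (2π x)` on the circle `ℝ/ℤ`. -/
noncomputable def sinA : AddCircle (1 : ℝ) → ℝ := sin2pi_periodic.lift

/-- The `d`-dimensional torus `𝕋^d = ℝ^d/ℤ^d`, with its Haar probability measure `volume`. -/
abbrev Torus (d : ℕ) := Fin d → AddCircle (1 : ℝ)

/-- `cos (2π k·x)` for `k ∈ ℤ^d` and `x ∈ 𝕋^d`. -/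
noncomputable def tcos {d : ℕ} (k : Fin d → ℤ) (x : Torus d) : ℝ := cosA (∑ i, k i • x i)

/-- `sin (2π k·x)` for `k ∈ ℤ^d` and `x ∈ 𝕋^d`. -/
noncomputable def tsin {d : ℕ} (k : Fin d → ℤ) (x : Torus d) : ℝ := sinA (∑ i, k i • x i)

/-- The autocorrelation of a measure `ρ` on `𝕋^d`: the pushforward of `ρ × ρ`
under `(x, y) ↦ x - y`. -/
noncomputable def autocorr {d : ℕ} (ρ : Measure (Torus d)) : Measure (Torus d) :=
  (ρ.prod ρ).map (fun p => p.1 - p.2)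

/-- The relaxed cone `C`: nonnegative measures on `𝕋^d` of total mass one with vanishing
sine coefficients and nonnegative cosine coefficients for all `k ≠ 0`. -/
def inCone {d : ℕ} (F : Measure (Torus d)) : Prop :=
  F Set.univ = 1 ∧ ∀ k : Fin d → ℤ, k ≠ 0 →
    (∫ x, tsin k x ∂F) = 0 ∧ 0 ≤ ∫ x, tcos k x ∂F

/-- The pairwise interaction energy `E(ρ) = (1/2) ∫∫ W(x - y) dρ(x) dρ(y)`. -/
noncomputable def energy {d : ℕ} (W : Torus d → ℝ) (ρ : Measure (Torus d)) : ℝ :=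
  (1/2) * ∫ x, ∫ y, W (x - y) ∂ρ ∂ρ

section Aux

lemma cosA_coe (t : ℝ) : cosA (t : AddCircle (1 : ℝ)) = Real.cos (2 * Real.pi * t) :=
  cos2pi_periodic.lift_coe t

lemma sinA_coe (t : ℝ) : sinA (t : AddCircle (1 : ℝ)) = Real.sin (2 * Real.pi * t) :=
  sin2pi_periodic.lift_coe t

lemma continuous_cosA : Continuous cosA :=
  Continuous.quotient_liftOn' (by fun_prop) _

lemma continuous_sinA : Continuous sinA :=
  Continuous.quotient_liftOn' (by fun_prop) _

lemma abs_cosA_le (z : AddCircle (1 : ℝ)) : |cosA z| ≤ 1 := by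
  induction z using QuotientAddGroup.induction_on with
  | H t => rw [cosA_coe]; exact Real.abs_cos_le_one _

lemma cosA_sub (x y : AddCircle (1 : ℝ)) :
    cosA (x - y) = cosA x * cosA y + sinA x * sinA y := by
  induction x using QuotientAddGroup.induction_on with
  | H s =>
    induction y using QuotientAddGroup.induction_on with
    | H t =>
      have h : ((s : AddCircle (1:ℝ)) - (t : AddCircle (1:ℝ))) = ((s - t : ℝ) : AddCircle (1:ℝ)) :=
        (QuotientAddGroup.mk_sub _ s t).symm
      rw [h]
      simp only [cosA_coe, sinA_coe, mul_sub]
      exact Real.cos_sub _ _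

lemma sinA_sub (x y : AddCircle (1 : ℝ)) :
    sinA (x - y) = sinA x * cosA y - cosA x * sinA y := by
  induction x using QuotientAddGroup.induction_on with
  | H s =>
    induction y using QuotientAddGroup.induction_on with
    | H t =>
      have h : ((s : AddCircle (1:ℝ)) - (t : AddCircle (1:ℝ))) = ((s - t : ℝ) : AddCircle (1:ℝ)) :=
        (QuotientAddGroup.mk_sub _ s t).symm
      rw [h]
      simp only [cosA_coe, sinA_coe, mul_sub]
      exact Real.sin_sub _ _

lemma continuous_tcos {d : ℕ} (k : Fin d → ℤ) : Continuous (tcos k) :=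
  continuous_cosA.comp (by fun_prop)

lemma continuous_tsin {d : ℕ} (k : Fin d → ℤ) : Continuous (tsin k) :=
  continuous_sinA.comp (by fun_prop)

lemma tcos_sub {d : ℕ} (k : Fin d → ℤ) (x y : Torus d) :
    tcos k (x - y) = tcos k x * tcos k y + tsin k x * tsin k y := by
  have h : (∑ i, k i • (x - y) i) = (∑ i, k i • x i) - (∑ i, k i • y i) := by
    rw [← Finset.sum_sub_distrib]
    exact Finset.sum_congr rfl fun i _ => by simp [zsmul_sub]
  simp only [tcos, tsin, h, cosA_sub]

lemma tsin_sub {d : ℕ} (k : Fin d → ℤ) (x y : Torus d) :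
    tsin k (x - y) = tsin k x * tcos k y - tcos k x * tsin k y := by
  have h : (∑ i, k i • (x - y) i) = (∑ i, k i • x i) - (∑ i, k i • y i) := by
    rw [← Finset.sum_sub_distrib]
    exact Finset.sum_congr rfl fun i _ => by simp [zsmul_sub]
  simp only [tcos, tsin, h, sinA_sub]

lemma cont_integrable {X : Type*} [TopologicalSpace X] [CompactSpace X] [MeasurableSpace X]
    [OpensMeasurableSpace X] {μ : Measure X} [IsFiniteMeasure μ] {f : X → ℝ}
    (hf : Continuous f) : Integrable f μ :=
  hf.integrable_of_hasCompactSupport (IsClosed.isCompact (isClosed_tsupport f))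

end Aux

/-- Proposition 5.1, item 2: if `W` admits an admissible dual decomposition
`W = W⁺ + K + 2c`, then `(1/2) ∫ W dF ≥ c` for every `F` in the relaxed cone `C`; in
particular `c` is a lower bound for the pairwise energy over probability measures. -/
theorem stmt8 {d : ℕ} (W Wp : Torus d → ℝ) (a : (Fin d → ℤ) → ℝ) (c : ℝ)
    (hWc : Continuous W) (hWpc : Continuous Wp) (hWp : ∀ x, 0 ≤ Wp x)
    (ha_symm : ∀ k, a (-k) = a k) (ha_nonneg : ∀ k, k ≠ 0 → 0 ≤ a k) (ha0 : a 0 = 0)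
    (ha_sum : Summable a)
    (hdecomp : ∀ x, W x = Wp x + (∑' k : Fin d → ℤ, a k * tcos k x) + 2 * c) :
    (∀ F : Measure (Torus d), inCone F → c ≤ (1/2) * ∫ x, W x ∂F) ∧
      (∀ ρ : Measure (Torus d), IsProbabilityMeasure ρ → c ≤ energy W ρ) := by
  have ha_nn : ∀ k, 0 ≤ a k := by
    intro k
    by_cases h : k = 0
    · simp [h, ha0]
    · exact ha_nonneg k h
  have main : ∀ F : Measure (Torus d), inCone F → c ≤ (1/2) * ∫ x, W x ∂F := by
    intro F hF
    obtain ⟨hF1, hFk⟩ := hF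
    haveI : IsProbabilityMeasure F := ⟨hF1⟩
    -- the interaction kernel K as a function
    set K : Torus d → ℝ := fun x => ∑' k : Fin d → ℤ, a k * tcos k x with hKdef
    have hKW : K = fun x => W x - Wp x - 2 * c := by
      funext x; rw [hdecomp x]; ring
    have hKc : Continuous K := by
      rw [hKW]; fun_prop
    -- swap integral and sum
    have hswap : ∫ x, K x ∂F = ∑' k : Fin d → ℤ, a k * ∫ x, tcos k x ∂F := by
      rw [hKdef]
      have hmeas : ∀ k : Fin d → ℤ,
          AEStronglyMeasurable (fun x => a k * tcos k x) F := fun k =>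
        (continuous_const.mul (continuous_tcos k)).aestronglyMeasurable
      have hbdd : ∀ (k : Fin d → ℤ),
          (∫⁻ x, ‖a k * tcos k x‖₊ ∂F) ≤ ENNReal.ofReal (a k) := by
        intro k
        have : ∀ x : Torus d, (‖a k * tcos k x‖₊ : ℝ≥0∞) ≤ ENNReal.ofReal (a k) := by
          intro x
          rw [← enorm_eq_nnnorm, ← ofReal_norm]
          apply ENNReal.ofReal_le_ofReal
          rw [norm_mul, Real.norm_eq_abs, Real.norm_eq_abs, abs_of_nonneg (ha_nn k)]
          calc a k * |tcos k x| ≤ a k * 1 :=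
                mul_le_mul_of_nonneg_left (abs_cosA_le _) (ha_nn k)
            _ = a k := mul_one _
        calc (∫⁻ x, ‖a k * tcos k x‖₊ ∂F) ≤ ∫⁻ _, ENNReal.ofReal (a k) ∂F :=
              lintegral_mono this
          _ = ENNReal.ofReal (a k) := by simp [hF1]
      have hne : (∑' k : Fin d → ℤ, ∫⁻ x, ‖a k * tcos k x‖₊ ∂F) ≠ ⊤ := by
        apply ne_top_of_le_ne_top (b := ∑' k : Fin d → ℤ, ENNReal.ofReal (a k))
        · rw [← ENNReal.ofReal_tsum_of_nonneg ha_nn ha_sum]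
          exact ENNReal.ofReal_ne_top
        · exact ENNReal.tsum_le_tsum hbdd
      rw [integral_tsum hmeas hne]
      congr 1
      funext k
      exact integral_const_mul _ _
    have hKnn : 0 ≤ ∫ x, K x ∂F := by
      rw [hswap]
      apply tsum_nonneg
      intro k
      by_cases h : k = 0
      · simp [h, ha0]
      · exact mul_nonneg (ha_nn k) (hFk k h).2
    have hWpint : Integrable Wp F := cont_integrable hWpc
    have hWint : Integrable W F := cont_integrable hWc
    have hKint : Integrable K F := cont_integrable hKc
    have hsplit : ∫ x, W x ∂F = (∫ x, Wp x ∂F) + (∫ x, K x ∂F) + 2 * c := by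
      have h1 : ∫ x, W x ∂F = ∫ x, (Wp x + K x + 2 * c) ∂F :=
        integral_congr_ae (Filter.Eventually.of_forall fun x => hdecomp x)
      have hadd : Integrable (fun x => Wp x + K x) F := hWpint.add hKint
      rw [h1, integral_add hadd (integrable_const _), integral_add hWpint hKint]
      simp
    have hWpnn : 0 ≤ ∫ x, Wp x ∂F := integral_nonneg hWp
    have : 2 * c ≤ ∫ x, W x ∂F := by
      rw [hsplit]; linarith
    linarith
  refine ⟨main, ?_⟩
  intro ρ hρ
  haveI := hρ
  have hsub : Measurable (fun p : Torus d × Torus d => p.1 - p.2) :=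
    (continuous_fst.sub continuous_snd).measurable
  set F : Measure (Torus d) := (ρ.prod ρ).map (fun p => p.1 - p.2) with hFdef
  haveI : IsProbabilityMeasure F := Measure.isProbabilityMeasure_map hsub.aemeasurable
  have hmapint : ∀ g : Torus d → ℝ, Continuous g →
      ∫ x, g x ∂F = ∫ p : Torus d × Torus d, g (p.1 - p.2) ∂(ρ.prod ρ) := by
    intro g hg
    rw [hFdef, integral_map hsub.aemeasurable hg.aestronglyMeasurable]
  have hcone : inCone F := by
    refine ⟨measure_univ, fun k hk => ?_⟩
    set Cc : ℝ := ∫ x, tcos k x ∂ρ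
    set S : ℝ := ∫ x, tsin k x ∂ρ
    constructor
    · rw [hmapint _ (continuous_tsin k)]
      have : (fun p : Torus d × Torus d => tsin k (p.1 - p.2)) =
          fun p => (tsin k p.1 * tcos k p.2 - tcos k p.1 * tsin k p.2) := by
        funext p; exact tsin_sub k p.1 p.2
      have hi1 : Integrable (fun p : Torus d × Torus d => tsin k p.1 * tcos k p.2) (ρ.prod ρ) :=
        cont_integrable (((continuous_tsin k).comp continuous_fst).mul
          ((continuous_tcos k).comp continuous_snd))
      have hi2 : Integrable (fun p : Torus d × Torus d => tcos k p.1 * tsin k p.2) (ρ.prod ρ) :=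
        cont_integrable (((continuous_tcos k).comp continuous_fst).mul
          ((continuous_tsin k).comp continuous_snd))
      rw [this, integral_sub hi1 hi2, integral_prod_mul, integral_prod_mul]
      ring
    · rw [hmapint _ (continuous_tcos k)]
      have : (fun p : Torus d × Torus d => tcos k (p.1 - p.2)) =
          fun p => (tcos k p.1 * tcos k p.2 + tsin k p.1 * tsin k p.2) := by
        funext p; exact tcos_sub k p.1 p.2
      have hi1 : Integrable (fun p : Torus d × Torus d => tcos k p.1 * tcos k p.2) (ρ.prod ρ) :=
        cont_integrable (((continuous_tcos k).comp continuous_fst).mul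
          ((continuous_tcos k).comp continuous_snd))
      have hi2 : Integrable (fun p : Torus d × Torus d => tsin k p.1 * tsin k p.2) (ρ.prod ρ) :=
        cont_integrable (((continuous_tsin k).comp continuous_fst).mul
          ((continuous_tsin k).comp continuous_snd))
      rw [this, integral_add hi1 hi2, integral_prod_mul, integral_prod_mul]
      exact add_nonneg (mul_self_nonneg _) (mul_self_nonneg _)
  have henergy : energy W ρ = (1/2) * ∫ x, W x ∂F := by
    rw [energy, hmapint _ hWc]
    congr 1
    rw [MeasureTheory.integral_prod _ (cont_integrable (by fun_prop))]
  rw [henergy]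
  exact main F hcone
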